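/- Let G be a finite simple graph, v a vertex of G with neighbors v_1, ..., v_d, and let G' be obtained from G by deleting v and adding d new vertices u_1, ..., u_d where u_i is adjacent only to v_i. Then for every set X of vertices of G with v ∉ X, the set X ∪ {v} is a dominating set of G if and only if X ∪ {u_1, ..., u_d} is a dominating set of G'. -/

import Mathlib

/-- The graph obtained from `G` by deleting `v` and attaching, for each neighbor `w`
of `v`, a new pendant vertex adjacent only to `w`. -/
def splitVertex {V : Type*} (G : SimpleGraph V) (v : V) :
    SimpleGraph ({u : V // u ≠ v} ⊕ {u : V // G.Adj v u}) where
  Adj x y :=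
    match x, y with
    | .inl a, .inl b => G.Adj a.1 b.1
    | .inl a, .inr w => a.1 = w.1
    | .inr w, .inl a => a.1 = w.1
    | .inr _, .inr _ => False
  symm := by
    constructor
    rintro (a | w) (b | u) h
    · exact G.adj_symm h
    · exact h
    · exact h
    · exact h
  loopless := by
    constructor
    rintro (a | w) h
    · exact G.irrefl h
    · exact h

theorem splitVertex_dominating_iff {V : Type*} (G : SimpleGraph V) (v : V) :
    ∀ X : Set V, v ∉ X →
      ((∀ w : V, w ∈ X ∪ {v} ∨ ∃ u ∈ X ∪ {v}, G.Adj u w) ↔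
        (∀ z : {u : V // u ≠ v} ⊕ {u : V // G.Adj v u},
          z ∈ (Sum.inl '' {a : {u : V // u ≠ v} | (a : V) ∈ X} ∪ Set.range Sum.inr) ∨
          ∃ u ∈ (Sum.inl '' {a : {u : V // u ≠ v} | (a : V) ∈ X} ∪ Set.range Sum.inr),
            (splitVertex G v).Adj u z)) := by
  intro X hvX
  constructor
  · intro h z
    rcases z with a | w
    · rcases h a.1 with (hX | hv) | ⟨u, hu, hadj⟩
      · exact Or.inl (Or.inl ⟨a, hX, rfl⟩)
      · exact absurd hv a.2
      · rcases hu with huX | huv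
        · have huv : u ≠ v := fun h => hvX (h ▸ huX)
          exact Or.inr ⟨Sum.inl ⟨u, huv⟩, Or.inl ⟨⟨u, huv⟩, huX, rfl⟩, hadj⟩
        · have hva : G.Adj v a.1 := huv ▸ hadj
          exact Or.inr ⟨Sum.inr ⟨a.1, hva⟩, Or.inr ⟨⟨a.1, hva⟩, rfl⟩,
            show a.1 = a.1 from rfl⟩
    · exact Or.inl (Or.inr ⟨w, rfl⟩)
  · intro h w
    by_cases hwv : w = v
    · exact Or.inl (Or.inr hwv)
    · rcases h (Sum.inl ⟨w, hwv⟩) with (⟨a, haX, ha⟩ | ⟨p, hp⟩) | ⟨u, hu, hadj⟩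
      · exact Or.inl (Or.inl (by cases ha; exact haX))
      · exact absurd hp (by simp)
      · rcases u with b | p
        · rcases hu with ⟨c, hcX, hc⟩ | ⟨p, hp⟩
          · obtain rfl := Sum.inl_injective hc
            exact Or.inr ⟨c.1, Or.inl hcX, hadj⟩
          · exact absurd hp (by simp)
        · have : w = p.1 := hadj
          exact Or.inr ⟨v, Or.inr rfl, this ▸ p.2⟩
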